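/- Let R be a commutative ring and I a proper ideal of R. If I is an n-absorbing ideal of R, then the radical √I is an n-absorbing ideal of R; furthermore, xⁿ ∈ I for every x ∈ √I. -/

import Mathlib

/-- A proper ideal `I` is `n`-absorbing if whenever a product of `n + 1` elements
lies in `I`, the product of some `n` of them (in increasing index order) lies in `I`. -/
def IsNAbsorbing {R : Type*} [CommRing R] (n : ℕ) (I : Ideal R) : Prop :=
  ∀ x : Fin (n + 1) → R, (∏ i, x i) ∈ I →
    ∃ ι : Fin n → Fin (n + 1), StrictMono ι ∧ (∏ j, x (ι j)) ∈ I

/-- `omegaR I` is the smallest positive integer `n` such that `I` is `n`-absorbing,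
and `∞` if no such `n` exists. -/
noncomputable def omegaR {R : Type*} [CommRing R] (I : Ideal R) : ℕ∞ :=
  sInf {w : ℕ∞ | ∃ n : ℕ, 0 < n ∧ w = (n : ℕ∞) ∧ IsNAbsorbing n I}

section Aux

variable {R : Type*} [CommRing R]

lemma aux_exists_not_mem {α : Type*} [Fintype α] [DecidableEq α] {s : Finset α}
    (h : s.card < Fintype.card α) : ∃ a, a ∉ s := by
  by_contra hc
  push_neg at hc
  have : s = Finset.univ := Finset.eq_univ_iff_forall.mpr hc
  rw [this, Finset.card_univ] at h
  omega

lemma aux_prod_succAbove_eq {n : ℕ} (k : Fin (n + 1)) (g : Fin (n + 1) → R) :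
    ∏ m : Fin n, g (k.succAbove m) = ∏ i ∈ Finset.univ.erase k, g i := by
  have hinj : Function.Injective k.succAbove := Fin.succAbove_right_injective
  have himg : (Finset.univ : Finset (Fin n)).image k.succAbove
      = (Finset.univ : Finset (Fin (n + 1))).erase k := by
    apply Finset.eq_of_subset_of_card_le
    · intro a ha
      obtain ⟨m, _, rfl⟩ := Finset.mem_image.mp ha
      exact Finset.mem_erase.mpr ⟨Fin.succAbove_ne k m, Finset.mem_univ _⟩
    · rw [Finset.card_image_of_injective _ hinj]
      simp
  rw [← himg, Finset.prod_image (fun x _ y _ hxy => hinj hxy)]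

lemma aux_absorb_succAbove {n : ℕ} {I : Ideal R} (h : IsNAbsorbing n I)
    (x : Fin (n + 1) → R) (hx : ∏ i, x i ∈ I) :
    ∃ k : Fin (n + 1), ∏ m : Fin n, x (k.succAbove m) ∈ I := by
  obtain ⟨ι, hmono, hprod⟩ := h x hx
  have hinj := hmono.injective
  have hcard : ((Finset.univ : Finset (Fin n)).image ι).card = n := by
    rw [Finset.card_image_of_injective _ hinj]; simp
  obtain ⟨k, hk⟩ := aux_exists_not_mem (s := (Finset.univ : Finset (Fin n)).image ι)
    (by rw [hcard]; simp)
  refine ⟨k, ?_⟩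
  have himg : (Finset.univ : Finset (Fin n)).image ι = Finset.univ.erase k := by
    apply Finset.eq_of_subset_of_card_le
    · intro a ha
      refine Finset.mem_erase.mpr ⟨?_, Finset.mem_univ _⟩
      rintro rfl
      exact hk ha
    · rw [hcard]; simp
  rw [aux_prod_succAbove_eq, ← himg, Finset.prod_image (fun x _ y _ hxy => hinj hxy)]
  exact hprod

lemma aux_absorb_many {n : ℕ} {I : Ideal R} (h : IsNAbsorbing n I)
    {σ : Type*} [DecidableEq σ] (f : σ → R) :
    ∀ (m : ℕ) (s : Finset σ), s.card = m → n ≤ m → (∏ i ∈ s, f i) ∈ I →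
      ∃ t, t ⊆ s ∧ t.card = n ∧ (∏ i ∈ t, f i) ∈ I := by
  intro m
  induction m with
  | zero =>
    intro s hs hnm hprod
    exact ⟨s, Finset.Subset.refl s, by omega, hprod⟩
  | succ m ih =>
    intro s hs hnm hprod
    rcases eq_or_lt_of_le hnm with heq | hlt
    · exact ⟨s, Finset.Subset.refl s, by omega, hprod⟩
    · have hnm' : n ≤ m := by omega
      obtain ⟨u, hus, hu⟩ := Finset.exists_subset_card_eq (s := s) (n := n) (by omega)
      set e := Finset.equivFinOfCardEq hu with he
      set g : Fin n → σ := fun m => (e.symm m : σ) with hg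
      have hginj : Function.Injective g := by
        intro a b hab
        exact e.symm.injective (Subtype.ext hab)
      have himg : Finset.univ.image g = u := by
        apply Finset.eq_of_subset_of_card_le
        · intro a ha
          obtain ⟨m, _, rfl⟩ := Finset.mem_image.mp ha
          exact (e.symm m).2
        · rw [Finset.card_image_of_injective _ hginj, hu]; simp
      have hprodg : ∏ m, f (g m) = ∏ i ∈ u, f i := by
        rw [← himg, Finset.prod_image (fun x _ y _ hxy => hginj hxy)]
      set y : Fin (n + 1) → R := Fin.snoc (fun m => f (g m)) (∏ i ∈ s \ u, f i) with hy
      have hyprod : ∏ k, y k ∈ I := by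
        rw [Fin.prod_univ_castSucc]
        simp only [hy, Fin.snoc_castSucc, Fin.snoc_last]
        rw [hprodg, mul_comm, Finset.prod_sdiff hus]
        exact hprod
      obtain ⟨k, hk⟩ := aux_absorb_succAbove h y hyprod
      by_cases hkl : k = Fin.last n
      · subst hkl
        rw [Fin.succAbove_last] at hk
        simp only [hy, Fin.snoc_castSucc] at hk
        rw [hprodg] at hk
        exact ⟨u, hus, hu, hk⟩
      · obtain ⟨k', rfl⟩ := Fin.exists_castSucc_eq.mpr hkl
        rw [aux_prod_succAbove_eq] at hk
        have hglast : Fin.last n ∈ Finset.univ.erase (Fin.castSucc k') :=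
          Finset.mem_erase.mpr ⟨fun hEq => hkl hEq.symm, Finset.mem_univ _⟩
        rw [← Finset.mul_prod_erase _ y hglast] at hk
        have hset : (Finset.univ.erase (Fin.castSucc k')).erase (Fin.last n)
            = (Finset.univ.erase k').image Fin.castSucc := by
          ext i
          simp only [Finset.mem_erase, Finset.mem_image, Finset.mem_univ, and_true, true_and]
          constructor
          · rintro ⟨hil, hik⟩
            obtain ⟨m, rfl⟩ := Fin.exists_castSucc_eq.mpr hil
            exact ⟨m, fun hEq => hik (by rw [hEq]), rfl⟩
          · rintro ⟨m, hm, rfl⟩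
            exact ⟨(Fin.castSucc_lt_last m).ne, fun hEq => hm (Fin.castSucc_injective _ hEq)⟩
        rw [hset, Finset.prod_image (fun x _ y _ hxy => Fin.castSucc_injective _ hxy)] at hk
        simp only [hy, Fin.snoc_castSucc, Fin.snoc_last] at hk
        have hgmem : g k' ∈ u := (e.symm k').2
        have himg2 : (Finset.univ.erase k').image g = u.erase (g k') := by
          rw [← himg]
          exact Finset.image_erase hginj _ _
        have hprodg2 : ∏ m ∈ Finset.univ.erase k', f (g m) = ∏ i ∈ u.erase (g k'), f i := by
          rw [← himg2, Finset.prod_image (fun x _ y _ hxy => hginj hxy)]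
        rw [hprodg2] at hk
        have hsub : u.erase (g k') ⊆ s.erase (g k') := Finset.erase_subset_erase _ hus
        have hsd : s.erase (g k') \ u.erase (g k') = s \ u := by
          ext z
          simp only [Finset.mem_sdiff, Finset.mem_erase]
          constructor
          · rintro ⟨⟨hza, hzs⟩, hz⟩
            exact ⟨hzs, fun hzu => hz ⟨hza, hzu⟩⟩
          · rintro ⟨hzs, hzu⟩
            exact ⟨⟨fun hEq => hzu (hEq ▸ hgmem), hzs⟩, fun hc => hzu hc.2⟩
        have hkey : ∏ i ∈ s.erase (g k'), f i ∈ I := by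
          rw [← Finset.prod_sdiff hsub, hsd]
          exact hk
        have hcard : (s.erase (g k')).card = m := by
          rw [Finset.card_erase_of_mem (hus hgmem), hs]
          omega
        obtain ⟨t, hts, htc, htp⟩ := ih (s.erase (g k')) hcard hnm' hkey
        exact ⟨t, hts.trans (Finset.erase_subset _ _), htc, htp⟩

end Aux

/-- If `I` is `n`-absorbing, then its radical is `n`-absorbing; moreover `x ^ n ∈ I`
for every `x` in the radical of `I`. -/
theorem isNAbsorbing_radical {R : Type*} [CommRing R] (n : ℕ) (hn : 0 < n)
    (I : Ideal R) (hI : I ≠ ⊤) (h : IsNAbsorbing n I) :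
    IsNAbsorbing n I.radical ∧ ∀ x ∈ I.radical, x ^ n ∈ I := by
  have hpow : ∀ x ∈ I.radical, x ^ n ∈ I := by
    intro x hx
    obtain ⟨k, hk⟩ := hx
    rcases le_or_gt k n with hkn | hnk
    · have hxe : x ^ n = x ^ (n - k) * x ^ k := by
        rw [← pow_add]
        congr 1
        omega
      rw [hxe]
      exact I.mul_mem_left _ hk
    · obtain ⟨t, -, htc, htp⟩ := aux_absorb_many h (σ := Fin k) (fun _ => x) k Finset.univ
        (by simp) (by omega) (by simpa using hk)
      simpa [Finset.prod_const, htc] using htp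
  refine ⟨?_, hpow⟩
  intro x hx
  obtain ⟨N, hN⟩ := hx
  have hN1 : (∏ i, x i) ^ (N + 1) ∈ I := by
    rw [pow_succ]
    exact I.mul_mem_right _ hN
  have hprod : (∏ p : Fin (n + 1) × Fin (N + 1), x p.1) ∈ I := by
    have heq : (∏ p : Fin (n + 1) × Fin (N + 1), x p.1) = (∏ i, x i) ^ (N + 1) := by
      rw [Fintype.prod_prod_type]
      simp [Finset.prod_const, Finset.prod_pow]
    rw [heq]
    exact hN1
  obtain ⟨t, -, htc, htp⟩ := aux_absorb_many h (fun p : Fin (n + 1) × Fin (N + 1) => x p.1)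
    ((n + 1) * (N + 1)) Finset.univ (by simp) (by nlinarith) hprod
  have himc : (t.image Prod.fst).card ≤ n := by
    exact Finset.card_image_le.trans htc.le
  obtain ⟨j, hj⟩ := aux_exists_not_mem (s := t.image Prod.fst) (by simp; omega)
  refine ⟨j.succAbove, Fin.strictMono_succAbove j, ?_⟩
  refine ⟨N + 1, ?_⟩
  set S : Finset (Fin (n + 1) × Fin (N + 1)) := (Finset.univ.erase j) ×ˢ Finset.univ with hS
  have htS : t ⊆ S := by
    intro p hp
    refine Finset.mem_product.mpr ⟨Finset.mem_erase.mpr ⟨?_, Finset.mem_univ _⟩, Finset.mem_univ _⟩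
    intro hEq
    exact hj (Finset.mem_image.mpr ⟨p, hp, hEq⟩)
  have hSI : (∏ p ∈ S, x p.1) ∈ I := by
    rw [← Finset.prod_sdiff htS]
    exact I.mul_mem_left _ htp
  have hSeq : (∏ p ∈ S, x p.1) = (∏ m : Fin n, x (j.succAbove m)) ^ (N + 1) := by
    rw [hS, Finset.prod_product]
    simp only [Finset.prod_const, Finset.card_univ, Fintype.card_fin]
    rw [aux_prod_succAbove_eq j x]
    exact Finset.prod_pow _ _ _
  rw [← hSeq]
  exact hSI
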